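/- Let t be an indeterminate and set a_n = (t^5 q;q)_{5n}/((t q;q)_n)^5 ∈ ℚ(q,t) and J(Q) = Σ_{n≥0} a_n Q^n ∈ ℚ(q,t)[[Q]]. Let E be the ℚ(q,t)-algebra map of ℚ(q,t)[[Q]] with E(Q) = qQ. Then (1 − tE)^5 (J − 1) = Q·∏_{j=1}^{5}(1 − q^j t^5 E^5) J, and consequently [(1−tE)^5 − Q ∏_{j=1}^{5}(1 − q^j t^5 E^5)] J = (1−t)^5. -/

import Mathlib

open Finset PowerSeries

/-- The field `ℚ(q,t)`. -/
noncomputable abbrev QQqt : Type := FractionRing (MvPolynomial (Fin 2) ℚ)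

noncomputable def qVar : QQqt := algebraMap (MvPolynomial (Fin 2) ℚ) QQqt (MvPolynomial.X 0)

noncomputable def tVar : QQqt := algebraMap (MvPolynomial (Fin 2) ℚ) QQqt (MvPolynomial.X 1)

/-- The `q`-Pochhammer symbol `(z;q)_d = ∏_{j=0}^{d−1} (1 − q^j z)`. -/
noncomputable def qPoch (z : QQqt) (d : ℕ) : QQqt :=
  ∏ j ∈ Finset.range d, (1 - qVar ^ j * z)

/-- The coefficients `a_n = (t⁵q;q)_{5n} / ((tq;q)_n)⁵`. -/
noncomputable def aCoeff (n : ℕ) : QQqt :=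
  qPoch (tVar ^ 5 * qVar) (5 * n) / (qPoch (tVar * qVar) n) ^ 5

/-- The series `J = ∑ a_n Qⁿ ∈ ℚ(q,t)[[Q]]`. -/
noncomputable def Jser : PowerSeries QQqt := PowerSeries.mk aCoeff

/-- The operator `1 − tE`, where `E(Q) = qQ`. -/
noncomputable def opA (f : PowerSeries QQqt) : PowerSeries QQqt :=
  f - PowerSeries.C tVar * PowerSeries.rescale qVar f

/-- The operator `1 − q^j t⁵ E⁵`, where `E(Q) = qQ`. -/
noncomputable def opB (j : ℕ) (f : PowerSeries QQqt) : PowerSeries QQqt :=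
  f - PowerSeries.C (qVar ^ j * tVar ^ 5) * PowerSeries.rescale (qVar ^ 5) f

lemma factor_ne (a b : ℕ) (hb : b ≠ 0) : (1 : QQqt) - qVar ^ a * tVar ^ b ≠ 0 := by
  intro h
  have h1 : qVar ^ a * tVar ^ b = 1 := by
    have := sub_eq_zero.mp h
    linear_combination -this
  have h2 : algebraMap (MvPolynomial (Fin 2) ℚ) QQqt
      (MvPolynomial.X 0 ^ a * MvPolynomial.X 1 ^ b) =
      algebraMap (MvPolynomial (Fin 2) ℚ) QQqt 1 := by
    rw [map_mul, map_pow, map_pow, map_one]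
    exact h1
  have h3 : (MvPolynomial.X 0 ^ a * MvPolynomial.X 1 ^ b : MvPolynomial (Fin 2) ℚ) = 1 :=
    IsFractionRing.injective (MvPolynomial (Fin 2) ℚ) QQqt h2
  have h4 := congrArg (MvPolynomial.eval (fun _ => (0 : ℚ))) h3
  simp [hb] at h4

lemma qPoch_ne (z : QQqt) (c : ℕ) (hc : c ≠ 0)
    (hz : z = tVar ^ c * qVar) (n : ℕ) : qPoch z n ≠ 0 := by
  subst hz
  refine Finset.prod_ne_zero_iff.mpr fun j _ => ?_
  have := factor_ne (j + 1) c hc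
  intro h
  apply this
  rw [← h]; ring

lemma qPoch_succ (z : QQqt) (d : ℕ) :
    qPoch z (d + 1) = qPoch z d * (1 - qVar ^ d * z) := Finset.prod_range_succ _ _

lemma coeff_opA (n : ℕ) (f : PowerSeries QQqt) :
    (PowerSeries.coeff n) (opA f) = (1 - tVar * qVar ^ n) * (PowerSeries.coeff n) f := by
  simp [opA, coeff_rescale]
  ring

lemma coeff_opA_iter (k n : ℕ) (f : PowerSeries QQqt) :
    (PowerSeries.coeff n) (opA^[k] f) =
      (1 - tVar * qVar ^ n) ^ k * (PowerSeries.coeff n) f := by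
  induction k with
  | zero => simp
  | succ k ih =>
    rw [Function.iterate_succ_apply', coeff_opA, ih]
    ring

lemma coeff_opB (j n : ℕ) (f : PowerSeries QQqt) :
    (PowerSeries.coeff n) (opB j f) =
      (1 - qVar ^ j * tVar ^ 5 * (qVar ^ 5) ^ n) * (PowerSeries.coeff n) f := by
  rw [opB, map_sub, PowerSeries.coeff_C_mul, coeff_rescale]
  ring

/-- the key q-hypergeometric coefficient recursion -/
lemma key (n : ℕ) :
    (1 - tVar * qVar ^ (n + 1)) ^ 5 * aCoeff (n + 1) =
      ((1 - qVar ^ 1 * tVar ^ 5 * (qVar ^ 5) ^ n) *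
      ((1 - qVar ^ 2 * tVar ^ 5 * (qVar ^ 5) ^ n) *
      ((1 - qVar ^ 3 * tVar ^ 5 * (qVar ^ 5) ^ n) *
      ((1 - qVar ^ 4 * tVar ^ 5 * (qVar ^ 5) ^ n) *
      ((1 - qVar ^ 5 * tVar ^ 5 * (qVar ^ 5) ^ n)))))) * aCoeff n := by
  have h5 : 5 * (n + 1) = (5 * n) + 1 + 1 + 1 + 1 + 1 := by ring
  unfold aCoeff
  rw [h5, qPoch_succ, qPoch_succ, qPoch_succ, qPoch_succ, qPoch_succ, qPoch_succ]
  have hden : qPoch (tVar * qVar) n ≠ 0 := qPoch_ne _ 1 one_ne_zero (by ring) n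
  have hfac : (1 : QQqt) - qVar ^ n * (tVar * qVar) ≠ 0 := by
    have := factor_ne (n + 1) 1 one_ne_zero
    intro h; apply this; rw [← h]; ring
  rw [show (1 : QQqt) - tVar * qVar ^ (n + 1) = 1 - qVar ^ n * (tVar * qVar) by ring]
  rw [div_eq_mul_inv, div_eq_mul_inv, mul_pow, mul_inv]
  have hg5 := mul_inv_cancel₀ (pow_ne_zero 5 hfac)
  linear_combination (qPoch (tVar ^ 5 * qVar) (5 * n) *
    ((1 - qVar ^ (5 * n) * (tVar ^ 5 * qVar)) * (1 - qVar ^ (5 * n + 1) * (tVar ^ 5 * qVar)) *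
     (1 - qVar ^ (5 * n + 2) * (tVar ^ 5 * qVar)) * (1 - qVar ^ (5 * n + 3) * (tVar ^ 5 * qVar)) *
     (1 - qVar ^ (5 * n + 4) * (tVar ^ 5 * qVar))) * (qPoch (tVar * qVar) n ^ 5)⁻¹) * hg5

lemma aCoeff_zero : aCoeff 0 = 1 := by
  simp [aCoeff, qPoch]

/-- Lemma 3.3 of the paper (with `e^x` replaced by `t`):
`(1 − tE)⁵ (J − 1) = Q ∏_{j=1}^{5}(1 − q^j t⁵ E⁵) J`, and consequently
`[(1−tE)⁵ − Q ∏_{j=1}^{5}(1 − q^j t⁵ E⁵)] J = (1−t)⁵`. -/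
theorem stmt_15 :
    opA^[5] (Jser - 1) =
      PowerSeries.X * opB 1 (opB 2 (opB 3 (opB 4 (opB 5 Jser)))) ∧
    opA^[5] Jser - PowerSeries.X * opB 1 (opB 2 (opB 3 (opB 4 (opB 5 Jser)))) =
      PowerSeries.C ((1 - tVar) ^ 5) := by
  constructor
  · ext n
    cases n with
    | zero =>
      rw [coeff_opA_iter]
      simp [Jser, aCoeff_zero]
    | succ n =>
      rw [coeff_opA_iter, PowerSeries.coeff_succ_X_mul, coeff_opB, coeff_opB, coeff_opB,
        coeff_opB, coeff_opB]
      simp only [map_sub, Jser, PowerSeries.coeff_mk, PowerSeries.coeff_one,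
        Nat.succ_ne_zero, if_false, sub_zero]
      rw [key n]; ring
  · ext n
    cases n with
    | zero =>
      rw [map_sub, coeff_opA_iter]
      simp [Jser, aCoeff_zero]
    | succ n =>
      rw [map_sub, coeff_opA_iter, PowerSeries.coeff_succ_X_mul, coeff_opB, coeff_opB,
        coeff_opB, coeff_opB, coeff_opB]
      simp only [Jser, PowerSeries.coeff_mk, PowerSeries.coeff_C, Nat.succ_ne_zero, if_false]
      rw [sub_eq_zero, key n]; ring
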